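/- End-to-end correctness of the PRF-based SOS Select (per block): let m ≥ 1, let M : ZMod m → Fin B → BitVec ℓb be the array split into B blocks per element, let F : ℕ → BitVec ℓb be any function (the PRF under the sender's fixed key), let t be a natural with B ≤ 2^t, and define the encrypted array C by C i j = M i j ^^^ F (i.val · 2^t + j.val). Let rdx : ZMod m, let S : ZMod m → Bool be the weight-1 bit vector over rdx, let idx : ZMod m, and set δ = rdx − idx in ZMod m. Then for every block j : Fin B, (XOR over all i : ZMod m of (if S (δ + i) then C i j else 0)) ^^^ F (idx.val · 2^t + j.val) = M idx j. -/

import Mathlib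

instance (ℓ : ℕ) : Std.Commutative (α := BitVec ℓ) (· ^^^ ·) := ⟨BitVec.xor_comm⟩
instance (ℓ : ℕ) : Std.Associative (α := BitVec ℓ) (· ^^^ ·) := ⟨BitVec.xor_assoc⟩

/-- XOR of the values of `f` over all elements of a finite index type. -/
def xorSum {ι : Type*} [Fintype ι] {ℓ : ℕ} (f : ι → BitVec ℓ) : BitVec ℓ :=
  Finset.univ.fold (· ^^^ ·) 0 f


lemma xorFold_zero {ι : Type*} [DecidableEq ι] {ℓ : ℕ} (s : Finset ι) :
    s.fold (β := BitVec ℓ) (· ^^^ ·) 0 (fun _ => 0) = 0 := by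
  induction s using Finset.induction with
  | empty => simp
  | insert _ _ h ih => rw [Finset.fold_insert h, ih]; simp

lemma xorFold_ite {ι : Type*} [DecidableEq ι] {ℓ : ℕ} (s : Finset ι) (a : ι)
    (ha : a ∈ s) (v : BitVec ℓ) :
    s.fold (β := BitVec ℓ) (· ^^^ ·) 0 (fun i => if i = a then v else 0) = v := by
  induction s using Finset.induction with
  | empty => simp at ha
  | @insert x s hx ih =>
    rcases Finset.mem_insert.mp ha with h | h
    · subst h
      have h0 : s.fold (β := BitVec ℓ) (· ^^^ ·) 0 (fun i => if i = a then v else 0)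
          = s.fold (β := BitVec ℓ) (· ^^^ ·) 0 (fun _ => 0) := by
        apply Finset.fold_congr
        intro i hi
        have hne : i ≠ a := fun h' => hx (h' ▸ hi)
        simp [hne]
      rw [Finset.fold_insert hx, h0.trans (xorFold_zero s)]
      simp
    · have hxa : x ≠ a := fun h' => hx (h' ▸ h)
      rw [Finset.fold_insert hx, if_neg hxa, ih h]
      simp

/-- End-to-end per-block correctness of the PRF-based SOS Select: selecting from the
encrypted array `C i j = M i j ^^^ F (i * 2^t + j)` with a weight-1 bit vector over `rdx`
and revealed offset `δ = rdx - idx`, then unmasking with the shared PRF value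
`F (idx * 2^t + j)`, recovers block `j` of `M idx`. -/
theorem prf_sos_select_correct {m B ℓb : ℕ} [NeZero m]
    (M : ZMod m → Fin B → BitVec ℓb) (F : ℕ → BitVec ℓb) (t : ℕ) (hB : B ≤ 2 ^ t)
    (C : ZMod m → Fin B → BitVec ℓb)
    (hC : ∀ (i : ZMod m) (j : Fin B), C i j = M i j ^^^ F (i.val * 2 ^ t + j.val))
    (rdx : ZMod m) (S : ZMod m → Bool)
    (hS : S rdx = true) (hS' : ∀ j : ZMod m, j ≠ rdx → S j = false)
    (idx : ZMod m) (j : Fin B) :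
    (xorSum (fun i : ZMod m => if S (rdx - idx + i) then C i j else 0)) ^^^
      F (idx.val * 2 ^ t + j.val) = M idx j := by
  have key : (fun i : ZMod m => if S (rdx - idx + i) then C i j else 0)
      = fun i => if i = idx then C idx j else 0 := by
    funext i
    by_cases h : i = idx
    · subst h; simp [hS]
    · have hne : rdx - idx + i ≠ rdx := by
        intro h'
        apply h
        have h2 : rdx - idx + i = rdx - idx + idx := by rw [h', sub_add_cancel]
        exact add_left_cancel h2
      rw [hS' _ hne]
      simp [h]
  rw [xorSum, key, xorFold_ite Finset.univ idx (Finset.mem_univ _) _, hC,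
    BitVec.xor_assoc, BitVec.xor_self, BitVec.xor_zero]
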